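/- Let λ = (√2/2)(1 + i) and c = i/(√2 (1 + i)). Then for every φ ∈ 𝓢(ℝ,ℂ): ∫_ℝ c e^{-λ |x|} (φ(x) + i φ''(x)) dx = φ(0). (That is, G(x) = c e^{-λ|x|} is the Green's function of the operator T⁻¹ = 1 - i p̂₀² = 1 + i d²/dx²: one has (T⁻¹ G)(x) = δ(x) in the sense of distributions.) -/

import Mathlib

open MeasureTheory Set Filter

lemma aux_exp_int {u : ℝ} (hu : 0 < u) :
    IntegrableOn (fun x : ℝ => Real.exp (u * x)) (Iic (0:ℝ)) := by
  have h1 : Integrable ((Ioi (0:ℝ)).indicator (fun x => Real.exp (-u * x))) := by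
    rw [integrable_indicator_iff measurableSet_Ioi]
    exact exp_neg_integrableOn_Ioi 0 hu
  have h2 := h1.comp_neg
  have h3 : (fun x : ℝ => (Ioi (0:ℝ)).indicator (fun y => Real.exp (-u * y)) (-x))
      = (Iio (0:ℝ)).indicator (fun x => Real.exp (u * x)) := by
    funext x
    by_cases hx : x < 0
    · simp only [Set.indicator_apply, mem_Ioi, mem_Iio, neg_pos, hx, if_true]
      congr 1; ring
    · simp [Set.indicator_apply, hx]
  rw [h3] at h2
  rw [integrableOn_Iic_iff_integrableOn_Iio]
  exact (integrable_indicator_iff measurableSet_Iio).mp h2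

theorem statement14 (l c : ℂ)
    (hl : l = (Real.sqrt 2 / 2 : ℝ) * (1 + Complex.I))
    (hc : c = Complex.I / ((Real.sqrt 2 : ℝ) * (1 + Complex.I))) :
    ∀ φ : SchwartzMap ℝ ℂ,
      ∫ x : ℝ, c * Complex.exp (-l * ((|x| : ℝ) : ℂ))
          * (φ x + Complex.I * deriv (deriv (⇑φ)) x) = φ 0 := by
  intro φ
  set u : ℝ := Real.sqrt 2 / 2 with hu_def
  have hu : 0 < u := by rw [hu_def]; positivity
  have hs : ((Real.sqrt 2 : ℝ) : ℂ) * ((Real.sqrt 2 : ℝ) : ℂ) = 2 := by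
    norm_cast
    exact Real.mul_self_sqrt (by norm_num)
  have hu2 : ((u:ℝ):ℂ) * ((u:ℝ):ℂ) = 1/2 := by
    rw [hu_def]
    push_cast
    linear_combination hs / 4
  have h2u : ((Real.sqrt 2:ℝ):ℂ) = 2 * ((u:ℝ):ℂ) := by
    rw [hu_def]; push_cast; ring
  have hneu : ((u:ℝ):ℂ) ≠ 0 := by
    simp only [ne_eq, Complex.ofReal_eq_zero]
    exact ne_of_gt hu
  have hne2 : (1 + Complex.I) ≠ 0 := by
    intro h
    have := congrArg Complex.re h
    simp at this
  have hl2 : l * l = Complex.I := by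
    rw [hl]
    linear_combination (1 + Complex.I) * (1 + Complex.I) * hu2 + (1/2 : ℂ) * Complex.I_sq
  have hne1 : ((Real.sqrt 2:ℝ):ℂ) ≠ 0 := by
    simp only [ne_eq, Complex.ofReal_eq_zero]
    positivity
  have hc' : ((Real.sqrt 2:ℝ):ℂ) * (1 + Complex.I) * c = Complex.I := by
    rw [hc]
    field_simp
  have hlc : l * c = Complex.I / 2 := by
    rw [h2u] at hc'
    rw [hl]
    linear_combination hc' / 2
  have hlre : l.re = u := by rw [hl]; simp
  -- Schwartz derivatives
  set φ₁ : SchwartzMap ℝ ℂ := SchwartzMap.derivCLM ℝ ℂ φ with hφ₁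
  set φ₂ : SchwartzMap ℝ ℂ := SchwartzMap.derivCLM ℝ ℂ φ₁ with hφ₂
  have hdφ : ∀ x : ℝ, HasDerivAt (⇑φ) (φ₁ x) x := fun x =>
    ((φ.smooth 1).differentiable one_ne_zero x).hasDerivAt
  have hdφ₁ : ∀ x : ℝ, HasDerivAt (⇑φ₁) (φ₂ x) x := fun x =>
    ((φ₁.smooth 1).differentiable one_ne_zero x).hasDerivAt
  have hder1 : deriv (⇑φ) = ⇑φ₁ := funext fun y => (SchwartzMap.derivCLM_apply (𝕜 := ℝ) φ y).symm
  have hder2 : deriv (deriv (⇑φ)) = ⇑φ₂ := by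
    rw [hder1]
    exact funext fun y => (SchwartzMap.derivCLM_apply (𝕜 := ℝ) φ₁ y).symm
  -- bounds
  have bdd : ∀ ψ : SchwartzMap ℝ ℂ, ∃ C : ℝ, 0 ≤ C ∧ ∀ x, ‖ψ x‖ ≤ C := by
    intro ψ
    obtain ⟨C, hCpos, hC⟩ := ψ.decay 0 0
    exact ⟨C, hCpos.le, fun x => by simpa [norm_iteratedFDeriv_zero] using hC x⟩
  obtain ⟨C0, hC0n, hC0⟩ := bdd φ
  obtain ⟨C1, hC1n, hC1⟩ := bdd φ₁
  obtain ⟨C2, hC2n, hC2⟩ := bdd φ₂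
  -- norms of the exponentials
  have hnormR : ∀ x : ℝ, ‖Complex.exp (-l * (x:ℂ))‖ = Real.exp (-u * x) := by
    intro x
    rw [Complex.norm_exp]
    congr 1
    simp only [Complex.neg_re, Complex.mul_re, Complex.ofReal_re, Complex.ofReal_im,
      mul_zero, sub_zero]
    rw [hlre]
  have hnormL : ∀ x : ℝ, ‖Complex.exp (l * (x:ℂ))‖ = Real.exp (u * x) := by
    intro x
    rw [Complex.norm_exp]
    congr 1
    simp only [Complex.mul_re, Complex.ofReal_re, Complex.ofReal_im, mul_zero, sub_zero]
    rw [hlre]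
  -- the boundary functions and their derivatives
  set FR : ℝ → ℂ := fun x => c * Complex.exp (-l * (x:ℂ)) * φ₁ x
      + l * c * Complex.exp (-l * (x:ℂ)) * φ x with hFRdef
  set FR' : ℝ → ℂ := fun x => c * Complex.exp (-l * (x:ℂ)) * (φ₂ x - Complex.I * φ x)
    with hFR'def
  set FL : ℝ → ℂ := fun x => c * Complex.exp (l * (x:ℂ)) * φ₁ x
      - l * c * Complex.exp (l * (x:ℂ)) * φ x with hFLdef
  set FL' : ℝ → ℂ := fun x => c * Complex.exp (l * (x:ℂ)) * (φ₂ x - Complex.I * φ x)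
    with hFL'def
  have hcoer : ∀ x : ℝ, HasDerivAt (fun y : ℝ => ((y:ℝ):ℂ)) 1 x := by
    intro x
    exact Complex.ofRealCLM.hasDerivAt (x := x)
  have heR : ∀ x : ℝ, HasDerivAt (fun y : ℝ => Complex.exp (-l * (y:ℂ)))
      (Complex.exp (-l * (x:ℂ)) * (-l)) x := by
    intro x
    simpa using ((hcoer x).const_mul (-l)).cexp
  have heL : ∀ x : ℝ, HasDerivAt (fun y : ℝ => Complex.exp (l * (y:ℂ)))
      (Complex.exp (l * (x:ℂ)) * l) x := by
    intro x
    simpa using ((hcoer x).const_mul l).cexp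
  have hFR : ∀ x : ℝ, HasDerivAt FR (FR' x) x := by
    intro x
    have hA := ((heR x).const_mul c).mul (hdφ₁ x)
    have hB := ((heR x).const_mul (l * c)).mul (hdφ x)
    refine (hA.add hB).congr_deriv ?_
    symm
    simp only [hFR'def]
    linear_combination (c * Complex.exp (-l * (x:ℂ)) * φ x) * hl2
  have hFL : ∀ x : ℝ, HasDerivAt FL (FL' x) x := by
    intro x
    have hA := ((heL x).const_mul c).mul (hdφ₁ x)
    have hB := ((heL x).const_mul (l * c)).mul (hdφ x)
    refine (hA.sub hB).congr_deriv ?_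
    symm
    simp only [hFL'def]
    linear_combination (c * Complex.exp (l * (x:ℂ)) * φ x) * hl2
  -- limits at infinity
  have hexpR : Tendsto (fun x : ℝ => Real.exp (-u * x)) atTop (nhds 0) := by
    have h1 : Tendsto (fun x : ℝ => -u * x) atTop atBot :=
      tendsto_id.const_mul_atTop_of_neg (neg_neg_iff_pos.2 hu)
    exact Real.tendsto_exp_atBot.comp h1
  have hexpL : Tendsto (fun x : ℝ => Real.exp (u * x)) atBot (nhds 0) := by
    have h1 : Tendsto (fun x : ℝ => u * x) atBot atBot :=
      Tendsto.const_mul_atBot hu tendsto_id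
    exact Real.tendsto_exp_atBot.comp h1
  have htendR : Tendsto FR atTop (nhds 0) := by
    have hg : Tendsto (fun x : ℝ => ‖c‖ * C1 * Real.exp (-u * x)
        + ‖l * c‖ * C0 * Real.exp (-u * x)) atTop (nhds 0) := by
      have := (hexpR.const_mul (‖c‖ * C1)).add (hexpR.const_mul (‖l * c‖ * C0))
      simpa using this
    apply squeeze_zero_norm _ hg
    intro x
    simp only [hFRdef]
    refine (norm_add_le _ _).trans (add_le_add ?_ ?_)
    · rw [norm_mul, norm_mul, hnormR x]
      calc ‖c‖ * Real.exp (-u * x) * ‖φ₁ x‖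
          ≤ ‖c‖ * Real.exp (-u * x) * C1 := by gcongr; exact hC1 x
        _ = ‖c‖ * C1 * Real.exp (-u * x) := by ring
    · rw [norm_mul, norm_mul, hnormR x]
      calc ‖l * c‖ * Real.exp (-u * x) * ‖φ x‖
          ≤ ‖l * c‖ * Real.exp (-u * x) * C0 := by gcongr; exact hC0 x
        _ = ‖l * c‖ * C0 * Real.exp (-u * x) := by ring
  have htendL : Tendsto FL atBot (nhds 0) := by
    have hg : Tendsto (fun x : ℝ => ‖c‖ * C1 * Real.exp (u * x)
        + ‖l * c‖ * C0 * Real.exp (u * x)) atBot (nhds 0) := by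
      have := (hexpL.const_mul (‖c‖ * C1)).add (hexpL.const_mul (‖l * c‖ * C0))
      simpa using this
    apply squeeze_zero_norm _ hg
    intro x
    simp only [hFLdef]
    refine (norm_sub_le _ _).trans (add_le_add ?_ ?_)
    · rw [norm_mul, norm_mul, hnormL x]
      calc ‖c‖ * Real.exp (u * x) * ‖φ₁ x‖
          ≤ ‖c‖ * Real.exp (u * x) * C1 := by gcongr; exact hC1 x
        _ = ‖c‖ * C1 * Real.exp (u * x) := by ring
    · rw [norm_mul, norm_mul, hnormL x]
      calc ‖l * c‖ * Real.exp (u * x) * ‖φ x‖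
          ≤ ‖l * c‖ * Real.exp (u * x) * C0 := by gcongr; exact hC0 x
        _ = ‖l * c‖ * C0 * Real.exp (u * x) := by ring
  -- integrability of the derivatives
  have hcombC : Continuous fun x : ℝ => φ₂ x - Complex.I * φ x :=
    φ₂.continuous.sub (continuous_const.mul φ.continuous)
  have hcombB : ∀ x : ℝ, ‖φ₂ x - Complex.I * φ x‖ ≤ C2 + C0 := by
    intro x
    refine (norm_sub_le _ _).trans (add_le_add (hC2 x) ?_)
    rw [norm_mul, Complex.norm_I, one_mul]
    exact hC0 x
  have hintR : IntegrableOn FR' (Ioi (0:ℝ)) := by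
    have hdom : Integrable (fun x => ‖c‖ * (C2 + C0) * Real.exp (-u * x))
        (volume.restrict (Ioi (0:ℝ))) := (exp_neg_integrableOn_Ioi 0 hu).const_mul _
    refine Integrable.mono' hdom ?_ ?_
    · exact ((continuous_const.mul (Complex.continuous_exp.comp
        (continuous_const.mul Complex.continuous_ofReal))).mul hcombC).aestronglyMeasurable
    · refine Filter.Eventually.of_forall fun x => ?_
      simp only [hFR'def]
      rw [norm_mul, norm_mul, hnormR x]
      calc ‖c‖ * Real.exp (-u * x) * ‖φ₂ x - Complex.I * φ x‖
          ≤ ‖c‖ * Real.exp (-u * x) * (C2 + C0) := by gcongr; exact hcombB x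
        _ = ‖c‖ * (C2 + C0) * Real.exp (-u * x) := by ring
  have hintL : IntegrableOn FL' (Iic (0:ℝ)) := by
    have hdom : Integrable (fun x => ‖c‖ * (C2 + C0) * Real.exp (u * x))
        (volume.restrict (Iic (0:ℝ))) := (aux_exp_int hu).const_mul _
    refine Integrable.mono' hdom ?_ ?_
    · exact ((continuous_const.mul (Complex.continuous_exp.comp
        (continuous_const.mul Complex.continuous_ofReal))).mul hcombC).aestronglyMeasurable
    · refine Filter.Eventually.of_forall fun x => ?_
      simp only [hFL'def]
      rw [norm_mul, norm_mul, hnormL x]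
      calc ‖c‖ * Real.exp (u * x) * ‖φ₂ x - Complex.I * φ x‖
          ≤ ‖c‖ * Real.exp (u * x) * (C2 + C0) := by gcongr; exact hcombB x
        _ = ‖c‖ * (C2 + C0) * Real.exp (u * x) := by ring
  -- fundamental theorem of calculus on the half lines
  have hIR : ∫ x in Ioi (0:ℝ), FR' x = 0 - FR 0 :=
    integral_Ioi_of_hasDerivAt_of_tendsto' (fun x _ => hFR x) hintR htendR
  have hIL : ∫ x in Iic (0:ℝ), FL' x = FL 0 - 0 :=
    integral_Iic_of_hasDerivAt_of_tendsto' (fun x _ => hFL x) hintL htendL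
  -- identifying the integrand on the two half lines
  have hEqR : EqOn (fun x : ℝ => c * Complex.exp (-l * ((|x|:ℝ):ℂ))
      * (φ x + Complex.I * deriv (deriv (⇑φ)) x)) (fun x => Complex.I * FR' x) (Ioi 0) := by
    intro x hx
    have hax : |x| = x := abs_of_pos hx
    simp only [hax, hder2, hFR'def]
    linear_combination (c * Complex.exp (-l * (x:ℂ)) * φ x) * Complex.I_sq
  have hEqL : EqOn (fun x : ℝ => c * Complex.exp (-l * ((|x|:ℝ):ℂ))
      * (φ x + Complex.I * deriv (deriv (⇑φ)) x)) (fun x => Complex.I * FL' x) (Iic 0) := by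
    intro x hx
    have hax : ((|x|:ℝ):ℂ) = -(x:ℂ) := by
      rw [abs_of_nonpos hx]; push_cast; ring
    have harg : -l * ((|x|:ℝ):ℂ) = l * (x:ℂ) := by rw [hax]; ring
    simp only [hder2, hFL'def, harg]
    linear_combination (c * Complex.exp (l * (x:ℂ)) * φ x) * Complex.I_sq
  have hIntR : IntegrableOn (fun x : ℝ => c * Complex.exp (-l * ((|x|:ℝ):ℂ))
      * (φ x + Complex.I * deriv (deriv (⇑φ)) x)) (Ioi (0:ℝ)) :=
    IntegrableOn.congr_fun (hintR.const_mul Complex.I) hEqR.symm measurableSet_Ioi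
  have hIntL : IntegrableOn (fun x : ℝ => c * Complex.exp (-l * ((|x|:ℝ):ℂ))
      * (φ x + Complex.I * deriv (deriv (⇑φ)) x)) (Iic (0:ℝ)) :=
    IntegrableOn.congr_fun (hintL.const_mul Complex.I) hEqL.symm measurableSet_Iic
  rw [← intervalIntegral.integral_Iic_add_Ioi hIntL hIntR]
  rw [setIntegral_congr_fun measurableSet_Iic hEqL, setIntegral_congr_fun measurableSet_Ioi hEqR]
  rw [integral_const_mul, integral_const_mul, hIL, hIR]
  simp only [hFRdef, hFLdef, Complex.ofReal_zero, mul_zero, neg_mul, neg_zero, Complex.exp_zero]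
  linear_combination (-2 * Complex.I * φ 0) * hlc - (φ 0) * Complex.I_sq
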